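/- arXiv:1901.04083 — 4 statements merged into one kernel-verified Lean document; each statement's English description precedes it below -/
import Mathlib

section
/- For any nonzero complex constant c and any positive real k, the entire function Ψ(z) = z + c e^{ikz} attains every complex value infinitely many times; in particular Ψ is not injective on ℂ. -/
open Complex Filter Set Metric Function NNReal

private lemma ev_log_aux (C : ℝ) :
    ∀ᶠ n : ℕ in atTop, Real.log (C + 8 * n) + Real.pi ≤ (n : ℝ) := by
  have hg : Tendsto (fun x : ℝ => C + 8 * x) atTop atTop :=
    tendsto_atTop_add_const_left _ C (tendsto_id.const_mul_atTop (by norm_num))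
  have h1 : (fun x : ℝ => Real.log (C + 8 * x)) =o[atTop] fun x : ℝ => C + 8 * x :=
    Real.isLittleO_log_id_atTop.comp_tendsto hg
  have h2 : (fun x : ℝ => C + 8 * x) =O[atTop] fun x : ℝ => x := by
    apply Asymptotics.IsBigO.of_bound (|C| + 8)
    filter_upwards [eventually_ge_atTop (1 : ℝ)] with x hx
    have hx0 : (0:ℝ) ≤ x := by linarith
    rw [Real.norm_eq_abs, Real.norm_eq_abs, _root_.abs_of_nonneg hx0]
    calc |C + 8 * x| ≤ |C| + 8 * x := by
          refine (abs_add_le _ _).trans ?_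
          simp [_root_.abs_of_nonneg (by linarith : (0:ℝ) ≤ 8 * x)]
      _ ≤ (|C| + 8) * x := by nlinarith [abs_nonneg C]
  have h3 := (h1.trans_isBigO h2).bound (by norm_num : (0:ℝ) < 1/2)
  have h4 : Tendsto (fun n : ℕ => (n : ℝ)) atTop atTop := tendsto_natCast_atTop_atTop
  filter_upwards [h4.eventually h3, eventually_ge_atTop 7] with n hn hn7
  have hpi : Real.pi ≤ (n:ℝ)/2 := by
    have h7 : (7:ℝ) ≤ (n:ℝ) := by exact_mod_cast hn7
    nlinarith [Real.pi_lt_d2]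
  have hlog : Real.log (C + 8 * n) ≤ (n:ℝ)/2 := by
    rw [Real.norm_eq_abs, Real.norm_eq_abs] at hn
    calc Real.log (C + 8 * n) ≤ |Real.log (C + 8 * n)| := le_abs_self _
      _ ≤ 1/2 * |(n:ℝ)| := hn
      _ = (n:ℝ)/2 := by rw [_root_.abs_of_nonneg (Nat.cast_nonneg n)]; ring
  linarith

private lemma lambert_eventually (b : ℂ) (hb : b ≠ 0) :
    ∀ᶠ n : ℕ in atTop, ∃ v : ℂ, v * Complex.exp v = b ∧
      2 * Real.pi * n + (Complex.log b).im - Real.pi < v.im ∧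
      v.im < 2 * Real.pi * n + (Complex.log b).im := by
  filter_upwards [ev_log_aux (‖Complex.log b‖), eventually_ge_atTop 2] with n hlogn hn2
  set C : ℝ := ‖Complex.log b‖ with hC
  set t : ℝ := (Complex.log b).im with ht
  have hpi := Real.pi_gt_three
  have htlb : -Real.pi < t := Complex.neg_pi_lt_log_im b
  have htub : t ≤ Real.pi := Complex.log_im_le_pi b
  have hn2R : (2:ℝ) ≤ (n:ℝ) := by exact_mod_cast hn2
  set L : ℂ := Complex.log b + (2 * Real.pi * n : ℝ) * Complex.I with hL
  have hLim : L.im = t + 2 * Real.pi * n := by simp [hL, ht]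
  set s : Set ℂ := Metric.closedBall L (n : ℝ) with hs
  -- every point of the ball has imaginary part ≥ n and modulus in [n, C + 8n]
  have him : ∀ v ∈ s, (n : ℝ) ≤ v.im := by
    intro v hv
    have h1 : |(v - L).im| ≤ ‖v - L‖ := Complex.abs_im_le_norm _
    have h2 : ‖v - L‖ ≤ (n : ℝ) := by
      rwa [Metric.mem_closedBall, Complex.dist_eq] at hv
    rw [Complex.sub_im] at h1
    have h3 := (abs_le.mp (h1.trans h2)).1
    rw [hLim] at h3
    nlinarith
  have habs : ∀ v ∈ s, (n : ℝ) ≤ ‖v‖ := fun v hv =>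
    (him v hv).trans (Complex.im_le_norm v)
  have habs' : ∀ v ∈ s, ‖v‖ ≤ C + 8 * n := by
    intro v hv
    have h2 : ‖v - L‖ ≤ (n : ℝ) := by
      rwa [Metric.mem_closedBall, Complex.dist_eq] at hv
    have hLabs : ‖L‖ ≤ C + 2 * Real.pi * n := by
      refine (norm_add_le _ _).trans ?_
      have : ‖(2 * Real.pi * n : ℝ) * Complex.I‖ = 2 * Real.pi * n := by
        rw [norm_mul, Complex.norm_I, Complex.norm_real, Real.norm_eq_abs, mul_one,
          _root_.abs_of_nonneg (by positivity)]
      rw [this]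
    calc ‖v‖ = ‖v - L + L‖ := by ring_nf
      _ ≤ ‖v - L‖ + ‖L‖ := norm_add_le _ _
      _ ≤ (n:ℝ) + (C + 2 * Real.pi * n) := add_le_add h2 hLabs
      _ ≤ C + 8 * n := by nlinarith [Real.pi_lt_d2]
  have hslit : ∀ v ∈ s, v ∈ Complex.slitPlane := by
    intro v hv
    refine Complex.mem_slitPlane_iff.mpr (Or.inr ?_)
    have := him v hv
    intro h0; rw [h0] at this; linarith
  -- the map F
  set F : ℂ → ℂ := fun v => L - Complex.log v with hF
  have hmaps : MapsTo F s s := by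
    intro v hv
    have hv1 : (1:ℝ) ≤ ‖v‖ := by linarith [habs v hv]
    have hlogv : ‖Complex.log v‖ ≤ Real.log (‖v‖) + Real.pi := by
      refine (Complex.norm_le_abs_re_add_abs_im _).trans ?_
      rw [Complex.log_re, Complex.log_im]
      have h1 : |Real.log (‖v‖)| = Real.log (‖v‖) :=
        _root_.abs_of_nonneg (Real.log_nonneg hv1)
      have h2 : |Complex.arg v| ≤ Real.pi := Complex.abs_arg_le_pi v
      linarith [le_of_eq h1]
    have hmono : Real.log (‖v‖) ≤ Real.log (C + 8 * n) :=
      Real.log_le_log (by linarith) (habs' v hv)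
    have : ‖Complex.log v‖ ≤ (n : ℝ) := by linarith
    simp only [hs, Metric.mem_closedBall, Complex.dist_eq, hF]
    have : F v - L = -(Complex.log v) := by rw [hF]; ring
    calc ‖L - Complex.log v - L‖ = ‖Complex.log v‖ := by
          rw [show L - Complex.log v - L = -(Complex.log v) by ring, norm_neg]
      _ ≤ (n:ℝ) := by linarith
  have hlip : LipschitzOnWith (1/2 : ℝ≥0) F s := by
    refine (convex_closedBall L (n:ℝ)).lipschitzOnWith_of_nnnorm_hasDerivWithin_le
      (f' := fun v => -(v⁻¹)) (fun v hv => ?_) (fun v hv => ?_)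
    · exact ((Complex.hasDerivAt_log (hslit v hv)).const_sub L).hasDerivWithinAt
    · rw [← NNReal.coe_le_coe, coe_nnnorm]
      push_cast
      rw [norm_neg, norm_inv]
      have h2 : (2:ℝ) ≤ ‖v‖ := by linarith [habs v hv]
      calc (‖v‖)⁻¹ ≤ (2:ℝ)⁻¹ := inv_anti₀ (by norm_num) h2
        _ ≤ _ := by norm_num
  have hcontr : ContractingWith (1/2 : ℝ≥0) (hmaps.restrict F s s) :=
    ⟨by rw [← NNReal.coe_lt_coe]; norm_num, hlip.mapsToRestrict hmaps⟩
  have hLmem : L ∈ s := Metric.mem_closedBall_self (by positivity)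
  obtain ⟨v, hvs, hfix, -, -⟩ :=
    hcontr.exists_fixedPoint' (Metric.isClosed_closedBall.isComplete) hmaps hLmem (edist_ne_top _ _)
  -- v is a fixed point: v = L - log v
  have hvim : (n:ℝ) ≤ v.im := him v hvs
  have hvne : v ≠ 0 := by
    intro h0; rw [h0] at hvim; simp at hvim; linarith
  have hlogv : Complex.log v = L - v := by
    have : L - Complex.log v = v := hfix
    linear_combination -this
  have hexpL : Complex.exp L = b := by
    rw [hL, Complex.exp_add, Complex.exp_log hb]
    have : ((2 * Real.pi * n : ℝ) : ℂ) * Complex.I = (n : ℂ) * (2 * Real.pi * Complex.I) := by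
      push_cast; ring
    rw [this, Complex.exp_nat_mul_two_pi_mul_I, mul_one]
  have hveq : v * Complex.exp v = b := by
    have h1 : Complex.exp (Complex.log v) = v := Complex.exp_log hvne
    rw [hlogv, Complex.exp_sub, hexpL] at h1
    field_simp at h1
    linear_combination -h1
  refine ⟨v, hveq, ?_, ?_⟩
  · -- lower bound on im
    have hargle : Complex.arg v < Real.pi :=
      Complex.arg_lt_pi_iff.mpr (Or.inr (by intro h0; rw [h0] at hvim; linarith))
    have harg : (Complex.log v).im = Complex.arg v := Complex.log_im v
    rw [hlogv, Complex.sub_im, hLim] at harg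
    linarith
  · -- upper bound on im
    have hargpos : 0 < Complex.arg v := by
      have h1 : 0 ≤ Complex.arg v := Complex.arg_nonneg_iff.mpr (by linarith)
      rcases h1.lt_or_eq with h | h
      · exact h
      · exfalso
        have := (Complex.arg_eq_zero_iff.mp h.symm).2
        rw [this] at hvim; linarith
    have harg : (Complex.log v).im = Complex.arg v := Complex.log_im v
    rw [hlogv, Complex.sub_im, hLim] at harg
    linarith

private lemma lambert_infinite (b : ℂ) (hb : b ≠ 0) :
    {v : ℂ | v * Complex.exp v = b}.Infinite := by
  obtain ⟨N, hN⟩ := eventually_atTop.mp (lambert_eventually b hb)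
  choose f hf1 hf2 hf3 using fun n : ℕ => hN (n + N) (Nat.le_add_left _ _)
  have hkey : ∀ m n : ℕ, m < n → (f m).im < (f n).im := by
    intro m n hmn
    have h1 := hf3 m
    have h2 := hf2 n
    have hmn' : (m:ℝ) + 1 ≤ (n:ℝ) := by exact_mod_cast hmn
    have hpi := Real.pi_gt_three
    have : (2:ℝ) * Real.pi * (m + N) + Real.pi ≤ 2 * Real.pi * (n + N) := by
      push_cast; nlinarith
    push_cast at h1 h2
    linarith
  have hsm : StrictMono (fun n : ℕ => (f n).im) := fun m n h => hkey m n h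
  exact Set.infinite_of_injective_forall_mem
    (fun m n h => hsm.injective (congrArg Complex.im h)) hf1

/-- For any nonzero `c ∈ ℂ` and `k > 0`, the entire function `Ψ(z) = z + c e^{ikz}`
attains every complex value infinitely many times; in particular `Ψ` is not injective. -/
theorem plane_perturbation_surjective_infinitely_often (c : ℂ) (hc : c ≠ 0)
    (k : ℝ) (hk : 0 < k) :
    (∀ w : ℂ, {z : ℂ | z + c * Complex.exp (Complex.I * k * z) = w}.Infinite) ∧
    ¬ Function.Injective (fun z : ℂ => z + c * Complex.exp (Complex.I * k * z)) := by
  have hkC : (k : ℂ) ≠ 0 := Complex.ofReal_ne_zero.mpr hk.ne'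
  have hmain : ∀ w : ℂ, {z : ℂ | z + c * Complex.exp (Complex.I * k * z) = w}.Infinite := by
    intro w
    set b : ℂ := Complex.I * k * c * Complex.exp (Complex.I * k * w) with hbdef
    have hb : b ≠ 0 := by
      apply mul_ne_zero (mul_ne_zero (mul_ne_zero Complex.I_ne_zero hkC) hc)
      exact Complex.exp_ne_zero _
    have hinf := lambert_infinite b hb
    set g : ℂ → ℂ := fun v => w + Complex.I * v / k with hg
    have hginj : Function.Injective g := by
      intro x y h
      simp only [hg] at h
      have := add_left_cancel h
      field_simp at this
      exact this
    have hmapsto : ∀ v ∈ {v : ℂ | v * Complex.exp v = b},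
        g v ∈ {z : ℂ | z + c * Complex.exp (Complex.I * k * z) = w} := by
      intro v hv
      simp only [Set.mem_setOf_eq] at hv ⊢
      have hvne : v ≠ 0 := by
        intro h0; rw [h0, zero_mul] at hv; exact hb hv.symm
      have harg : Complex.I * k * g v = Complex.I * k * w - v := by
        simp only [hg]
        field_simp
        ring_nf
        rw [Complex.I_sq]
        ring
      rw [harg, Complex.exp_sub]
      have hev : Complex.exp v = b / v := by
        rw [eq_div_iff hvne]
        linear_combination hv
      rw [hev]
      simp only [hg, hbdef]
      field_simp
      ring_nf
      rw [Complex.I_sq]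
      ring
    exact (hinf.image hginj.injOn).mono
      (fun z hz => by obtain ⟨v, hv, rfl⟩ := hz; exact hmapsto v hv)
  refine ⟨hmain, ?_⟩
  intro hinj
  obtain ⟨x, hx, y, hy, hxy⟩ := (hmain 0).nontrivial
  exact hxy (hinj (hx.trans hy.symm))
end

section
/- For any nonzero complex constant c and positive real k, there is no entire function Φ : ℂ → ℂ such that Φ(α + c e^{ikα}) = α for all real α. -/
/-- For any nonzero `c ∈ ℂ` and `k > 0`, there is no entire function `Φ : ℂ → ℂ`
with `Φ(α + c e^{ikα}) = α` for all real `α`. -/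
theorem no_entire_inverse_of_plane_perturbation (c : ℂ) (hc : c ≠ 0)
    (k : ℝ) (hk : 0 < k) :
    ¬ ∃ Φ : ℂ → ℂ, Differentiable ℂ Φ ∧
        ∀ α : ℝ, Φ ((α : ℂ) + c * Complex.exp (Complex.I * k * α)) = (α : ℂ) := by
  rintro ⟨Φ, hΦ, hinv⟩
  set Ψ : ℂ → ℂ := fun z => z + c * Complex.exp (Complex.I * k * z) with hΨ
  have hΨdiff : Differentiable ℂ Ψ := by
    apply differentiable_id.add
    exact (differentiable_const c).mul
      (Complex.differentiable_exp.comp ((differentiable_const _).mul differentiable_id))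
  have hFdiff : Differentiable ℂ (Φ ∘ Ψ) := hΦ.comp hΨdiff
  -- identity theorem: Φ ∘ Ψ = id
  have hfreq : ∃ᶠ z in nhdsWithin (0 : ℂ) {(0:ℂ)}ᶜ, (Φ ∘ Ψ) z = id z := by
    have htend : Filter.Tendsto (fun n : ℕ => ((1 / (n + 1) : ℝ) : ℂ)) Filter.atTop
        (nhdsWithin (0 : ℂ) {(0:ℂ)}ᶜ) := by
      apply tendsto_nhdsWithin_of_tendsto_nhds_of_eventually_within
      · have : Filter.Tendsto (fun n : ℕ => (1 / (n + 1) : ℝ)) Filter.atTop (nhds 0) :=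
          tendsto_one_div_add_atTop_nhds_zero_nat
        have := (Complex.continuous_ofReal.tendsto 0).comp this
        simpa [Function.comp_def] using this
      · filter_upwards with n
        simp only [Set.mem_compl_iff, Set.mem_singleton_iff]
        have : (1 / (n + 1) : ℝ) ≠ 0 := by positivity
        exact_mod_cast this
    apply htend.frequently
    apply Filter.Frequently.of_forall
    intro n
    simpa [Ψ] using hinv (1 / (n + 1) : ℝ)
  have hid : Φ ∘ Ψ = id := by
    apply AnalyticOnNhd.eq_of_frequently_eq (z₀ := (0:ℂ))
      ((hFdiff.differentiableOn).analyticOnNhd isOpen_univ)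
      ((differentiable_id.differentiableOn).analyticOnNhd isOpen_univ)
    exact hfreq
  have hΨinj : Function.Injective Ψ := by
    intro a b hab
    have ha := congrFun hid a
    have hb := congrFun hid b
    simp only [Function.comp, id] at ha hb
    rw [← ha, ← hb, hab]
  -- build two distinct points with equal Ψ-values
  set T : ℂ := ((Real.pi / k : ℝ) : ℂ) with hTdef
  have hT : T ≠ 0 := by
    simp only [hTdef, Ne, Complex.ofReal_eq_zero]
    positivity
  have hexp : Complex.exp (Complex.log (T / (2 * c))) = T / (2 * c) :=
    Complex.exp_log (by
      apply div_ne_zero hT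
      exact mul_ne_zero two_ne_zero hc)
  have hIk : Complex.I * (k : ℂ) ≠ 0 :=
    mul_ne_zero Complex.I_ne_zero (by exact_mod_cast hk.ne')
  set z₀ : ℂ := Complex.log (T / (2 * c)) / (Complex.I * k) with hz₀
  have hz₀exp : Complex.exp (Complex.I * k * z₀) = T / (2 * c) := by
    rw [hz₀, mul_div_cancel₀ _ hIk, hexp]
  have hkT : (k : ℂ) * T = (Real.pi : ℂ) := by
    rw [hTdef]
    have hk' : (k : ℂ) ≠ 0 := by exact_mod_cast hk.ne'
    push_cast
    field_simp
  have hexpT : Complex.exp (Complex.I * k * (z₀ + T)) = -(T / (2 * c)) := by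
    rw [mul_add, Complex.exp_add, hz₀exp]
    have : Complex.I * (k : ℂ) * T = Real.pi * Complex.I := by
      rw [mul_assoc, hkT, mul_comm]
    rw [this, Complex.exp_pi_mul_I]
    ring
  have hΨeq : Ψ z₀ = Ψ (z₀ + T) := by
    simp only [hΨ, hz₀exp, hexpT]
    have h2c : (2 : ℂ) * c ≠ 0 := mul_ne_zero two_ne_zero hc
    field_simp
    ring
  have := hΨinj hΨeq
  have : T = 0 := by linear_combination -this
  exact hT this
end

section
/- (Fixed point construction of periodic initial data.) Let c ∈ ℂ with |c| = ε. There exists ε₀ > 0 such that for all 0 ≤ ε ≤ ε₀ there is a bounded continuous 2π-periodic function ξ₀ : ℝ → ℂ such that ω := α + ξ₀ satisfies the functional equation ω̄(α) - α = c e^{-iω(α)} for all α ∈ ℝ, and moreover ‖ω - α - c̄ e^{iα}‖_{L^∞} ≤ C ε² for an absolute constant C. -/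
open Complex BoundedContinuousFunction

noncomputable section

namespace PeriodicFPAux

lemma exp_sub_exp_le {a b : ℂ} (h : ‖a - b‖ ≤ 1) :
    ‖Complex.exp a - Complex.exp b‖ ≤ 2 * ‖Complex.exp b‖ * ‖a - b‖ := by
  have key : Complex.exp a - Complex.exp b = Complex.exp b * (Complex.exp (a - b) - 1) := by
    rw [mul_sub, mul_one, ← Complex.exp_add]
    ring_nf
  rw [key, norm_mul]
  have h2 : ‖Complex.exp (a - b) - 1‖ ≤ 2 * ‖a - b‖ := Complex.norm_exp_sub_one_le h
  calc ‖Complex.exp b‖ * ‖Complex.exp (a - b) - 1‖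
      ≤ ‖Complex.exp b‖ * (2 * ‖a - b‖) := by gcongr
    _ = 2 * ‖Complex.exp b‖ * ‖a - b‖ := by ring

/-- The fixed point map. -/
def Phi (c : ℂ) (ξ : ℝ →ᵇ ℂ) : ℝ →ᵇ ℂ :=
  BoundedContinuousFunction.ofNormedAddCommGroup
    (fun α : ℝ => (starRingEnd ℂ) c *
      Complex.exp (Complex.I * α + Complex.I * (starRingEnd ℂ) (ξ α)))
    (by
      apply continuous_const.mul
      exact Complex.continuous_exp.comp
        ((continuous_const.mul Complex.continuous_ofReal).add
          (continuous_const.mul (continuous_star.comp ξ.continuous))))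
    (‖c‖ * Real.exp ‖ξ‖)
    (fun α => by
      have hre : (Complex.I * α + Complex.I * (starRingEnd ℂ) (ξ α)).re = (ξ α).im := by
        simp [Complex.add_re, Complex.mul_re]
      rw [norm_mul, Complex.norm_conj, Complex.norm_exp,
        hre]
      exact mul_le_mul_of_nonneg_left
        (Real.exp_le_exp.mpr (le_trans (Complex.im_le_norm _) (ξ.norm_coe_le_norm α)))
        (norm_nonneg c))

lemma Phi_apply (c : ℂ) (ξ : ℝ →ᵇ ℂ) (α : ℝ) :
    Phi c ξ α = (starRingEnd ℂ) c *
      Complex.exp (Complex.I * α + Complex.I * (starRingEnd ℂ) (ξ α)) := rfl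

end PeriodicFPAux

end

open PeriodicFPAux in
/-- Fixed point construction of periodic initial data: there are constants `C` and `ε₀ > 0`
such that for every `c ∈ ℂ` with `|c| = ε ≤ ε₀` there is a bounded continuous 2π-periodic
`ξ₀ : ℝ → ℂ` such that `ω(α) := α + ξ₀(α)` solves `conj ω(α) - α = c e^{-iω(α)}` for all
real `α`, with `‖ω - α - conj c · e^{iα}‖_{L^∞} ≤ C ε²`. -/
theorem periodic_initial_data_fixed_point :
    ∃ C : ℝ, 0 < C ∧ ∃ ε₀ : ℝ, 0 < ε₀ ∧
      ∀ (ε : ℝ) (c : ℂ), 0 ≤ ε → ε ≤ ε₀ → ‖c‖ = ε →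
        ∃ ξ₀ : ℝ → ℂ, Continuous ξ₀ ∧ (∃ M : ℝ, ∀ α : ℝ, ‖ξ₀ α‖ ≤ M) ∧
          Function.Periodic ξ₀ (2 * Real.pi) ∧
          (∀ α : ℝ, (starRingEnd ℂ) ((α : ℂ) + ξ₀ α) - (α : ℂ)
              = c * Complex.exp (-Complex.I * ((α : ℂ) + ξ₀ α))) ∧
          (∀ α : ℝ, ‖((α : ℂ) + ξ₀ α) - (α : ℂ) - (starRingEnd ℂ) c * Complex.exp (Complex.I * α)‖
              ≤ C * ε ^ 2) := by
  refine ⟨4, by norm_num, 1/8, by norm_num, fun ε c hε0 hε hc => ?_⟩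
  -- basic numeric facts
  have hexp2 : Real.exp (2 * ε) ≤ 2 := by
    have h1 : (2 : ℝ) * ε ≤ Real.log 2 := by
      have := Real.log_two_gt_d9
      nlinarith
    calc Real.exp (2 * ε) ≤ Real.exp (Real.log 2) := Real.exp_le_exp.mpr h1
      _ = 2 := Real.exp_log (by norm_num)
  have hcnorm : ‖c‖ = ε := hc
  -- the invariant ball
  have hmap : ∀ ξ : ℝ →ᵇ ℂ, ‖ξ‖ ≤ 2 * ε → ‖Phi c ξ‖ ≤ 2 * ε := by
    intro ξ hξ
    rw [BoundedContinuousFunction.norm_le (by positivity)]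
    intro α
    rw [Phi_apply, norm_mul, Complex.norm_conj,
      Complex.norm_exp, hc]
    have hre : (Complex.I * α + Complex.I * (starRingEnd ℂ) (ξ α)).re = (ξ α).im := by
      simp [Complex.add_re, Complex.mul_re]
    rw [hre]
    have h1 : (ξ α).im ≤ 2 * ε :=
      le_trans (le_trans (Complex.im_le_norm _) (ξ.norm_coe_le_norm α)) hξ
    calc ε * Real.exp (ξ α).im ≤ ε * Real.exp (2 * ε) := by
          gcongr
      _ ≤ ε * 2 := by gcongr
      _ = 2 * ε := by ring
  have hlip : ∀ ξ η : ℝ →ᵇ ℂ, ‖ξ‖ ≤ 2 * ε → ‖η‖ ≤ 2 * ε →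
      dist (Phi c ξ) (Phi c η) ≤ (1/2) * dist ξ η := by
    intro ξ η hξ hη
    rw [BoundedContinuousFunction.dist_le (by positivity)]
    intro α
    rw [dist_eq_norm, Phi_apply, Phi_apply, ← mul_sub, norm_mul,
      Complex.norm_conj, hc]
    set A := Complex.I * α + Complex.I * (starRingEnd ℂ) (ξ α)
    set B := Complex.I * α + Complex.I * (starRingEnd ℂ) (η α)
    have hAB : A - B = Complex.I * ((starRingEnd ℂ) (ξ α) - (starRingEnd ℂ) (η α)) := by
      simp only [A, B]; ring
    have hABnorm : ‖A - B‖ = ‖ξ α - η α‖ := by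
      rw [hAB, norm_mul, Complex.norm_I, one_mul, ← map_sub,
        Complex.norm_conj]
    have hd : ‖ξ α - η α‖ ≤ dist ξ η := by
      rw [← dist_eq_norm]; exact BoundedContinuousFunction.dist_coe_le_dist α
    have hdle : dist ξ η ≤ 4 * ε := by
      calc dist ξ η ≤ ‖ξ‖ + ‖η‖ := (dist_le_norm_add_norm ξ η)
        _ ≤ 2 * ε + 2 * ε := by gcongr
        _ = 4 * ε := by ring
    have hsmall : ‖A - B‖ ≤ 1 := by
      rw [hABnorm]
      calc ‖ξ α - η α‖ ≤ 4 * ε := le_trans hd hdle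
        _ ≤ 1 := by linarith
    have hexpB : ‖Complex.exp B‖ ≤ 2 := by
      rw [Complex.norm_exp]
      have hre : B.re = (η α).im := by
        simp [B, Complex.add_re, Complex.mul_re]
      rw [hre]
      have h1 : (η α).im ≤ 2 * ε :=
        le_trans (le_trans (Complex.im_le_norm _) (η.norm_coe_le_norm α)) hη
      exact le_trans (Real.exp_le_exp.mpr h1) hexp2
    have hA2 : ‖A - B‖ ≤ dist ξ η := by rw [hABnorm]; exact hd
    have hkey : 2 * ‖Complex.exp B‖ * ‖A - B‖ ≤ 2 * 2 * dist ξ η := by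
      nlinarith [norm_nonneg (A - B), norm_nonneg (Complex.exp B), dist_nonneg (x := ξ) (y := η)]
    calc ε * ‖Complex.exp A - Complex.exp B‖
        ≤ ε * (2 * ‖Complex.exp B‖ * ‖A - B‖) :=
          mul_le_mul_of_nonneg_left (exp_sub_exp_le hsmall) hε0
      _ ≤ ε * (2 * 2 * dist ξ η) := mul_le_mul_of_nonneg_left hkey hε0
      _ = 4 * ε * dist ξ η := by ring
      _ ≤ 4 * (1/8) * dist ξ η := by
          have := dist_nonneg (x := ξ) (y := η)
          nlinarith
      _ = (1/2) * dist ξ η := by ring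
  -- the complete metric space (closed ball in bounded continuous functions)
  let S := {ξ : ℝ →ᵇ ℂ // ‖ξ‖ ≤ 2 * ε}
  haveI : Nonempty S := ⟨⟨0, by rw [norm_zero]; positivity⟩⟩
  have hclosed : IsClosed {ξ : ℝ →ᵇ ℂ | ‖ξ‖ ≤ 2 * ε} :=
    isClosed_le continuous_norm continuous_const
  haveI : CompleteSpace S := hclosed.completeSpace_coe
  let F : S → S := fun ξ => ⟨Phi c ξ.1, hmap ξ.1 ξ.2⟩
  have hF : ContractingWith (1/2 : NNReal) F := by
    constructor
    · rw [one_div]; exact two_inv_lt_one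
    · apply LipschitzWith.of_dist_le_mul
      intro x y
      rw [Subtype.dist_eq, Subtype.dist_eq]
      have h := hlip x.1 y.1 x.2 y.2
      have hcast : ((1/2 : NNReal) : ℝ) = 1/2 := by norm_num
      rw [hcast]
      exact h
  set x := ContractingWith.fixedPoint F hF with hxdef
  have hfix : F x = x := hF.fixedPoint_isFixedPt
  have hfix' : Phi c x.1 = x.1 := congrArg Subtype.val hfix
  have hfixpt : ∀ α : ℝ, (starRingEnd ℂ) c *
      Complex.exp (Complex.I * α + Complex.I * (starRingEnd ℂ) (x.1 α)) = x.1 α := by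
    intro α
    conv_rhs => rw [← hfix']
    rfl
  refine ⟨fun α => x.1 α, x.1.continuous, ⟨‖x.1‖, fun α => x.1.norm_coe_le_norm α⟩, ?_, ?_, ?_⟩
  · -- periodicity
    let g : C(ℝ, ℝ) := ⟨fun t : ℝ => t + 2 * Real.pi, continuous_id.add continuous_const⟩
    have hgapp : ∀ t : ℝ, g t = t + 2 * Real.pi := fun t => rfl
    have hT : ∀ ξ : ℝ →ᵇ ℂ,
        (Phi c ξ).compContinuous g = Phi c (ξ.compContinuous g) := by
      intro ξ
      ext α
      rw [BoundedContinuousFunction.compContinuous_apply, Phi_apply, Phi_apply,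
        BoundedContinuousFunction.compContinuous_apply, hgapp]
      congr 1
      rw [show (Complex.I * ((α : ℝ) + 2 * Real.pi : ℝ) +
          Complex.I * (starRingEnd ℂ) (ξ (α + 2 * Real.pi)))
          = (Complex.I * α + Complex.I * (starRingEnd ℂ) (ξ (α + 2 * Real.pi)))
            + 2 * Real.pi * Complex.I by push_cast; ring,
        Complex.exp_add, Complex.exp_two_pi_mul_I, mul_one]
    have hynorm : ‖x.1.compContinuous g‖ ≤ 2 * ε :=
      le_trans (x.1.norm_compContinuous_le g) x.2
    let y : S := ⟨x.1.compContinuous g, hynorm⟩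
    have hyfix : F y = y := by
      apply Subtype.ext
      show Phi c (x.1.compContinuous g) = x.1.compContinuous g
      rw [← hT x.1, hfix']
    have : y = x := hF.fixedPoint_unique hyfix
    intro α
    have := congrArg (fun ξ : S => ξ.1 α) this
    exact this
  · -- functional equation
    intro α
    have h1 := congrArg (starRingEnd ℂ) (hfixpt α)
    rw [map_mul, Complex.conj_conj, ← Complex.exp_conj, map_add, map_mul, map_mul,
      Complex.conj_I, Complex.conj_ofReal, Complex.conj_conj] at h1
    rw [map_add, Complex.conj_ofReal]
    rw [show ((α : ℂ) + (starRingEnd ℂ) (x.1 α) - α) = (starRingEnd ℂ) (x.1 α) by ring, ← h1]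
    congr 1
    ring
  · -- error bound
    intro α
    have h2 : ((α : ℂ) + x.1 α) - α - (starRingEnd ℂ) c * Complex.exp (Complex.I * α)
        = (starRingEnd ℂ) c *
          (Complex.exp (Complex.I * α + Complex.I * (starRingEnd ℂ) (x.1 α))
            - Complex.exp (Complex.I * α)) := by
      rw [mul_sub, hfixpt α]; ring
    rw [h2, norm_mul, Complex.norm_conj, hc]
    have hd : ‖(Complex.I * α + Complex.I * (starRingEnd ℂ) (x.1 α)) - Complex.I * α‖
        = ‖x.1 α‖ := by
      rw [show (Complex.I * α + Complex.I * (starRingEnd ℂ) (x.1 α)) - Complex.I * α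
          = Complex.I * (starRingEnd ℂ) (x.1 α) by ring]
      simp [norm_mul, Complex.norm_conj, Complex.norm_I]
    have hxa : ‖x.1 α‖ ≤ 2 * ε := le_trans (x.1.norm_coe_le_norm α) x.2
    have hsmall : ‖(Complex.I * α + Complex.I * (starRingEnd ℂ) (x.1 α)) - Complex.I * α‖ ≤ 1 := by
      rw [hd]; linarith
    have hexpI : ‖Complex.exp (Complex.I * α)‖ = 1 := by
      rw [mul_comm, Complex.norm_exp_ofReal_mul_I]
    calc ε * ‖Complex.exp (Complex.I * α + Complex.I * (starRingEnd ℂ) (x.1 α))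
          - Complex.exp (Complex.I * α)‖
        ≤ ε * (2 * ‖Complex.exp (Complex.I * α)‖ *
            ‖(Complex.I * α + Complex.I * (starRingEnd ℂ) (x.1 α)) - Complex.I * α‖) := by
          gcongr; exact exp_sub_exp_le hsmall
      _ = ε * (2 * ‖x.1 α‖) := by rw [hexpI, hd]; ring
      _ ≤ ε * (2 * (2 * ε)) := by gcongr
      _ = 4 * ε ^ 2 := by ring
end

section
/- Oscillatory factor estimate (Lemma on regularity-to-decay with nonzero background): let k ≠ 0, s, m ≥ 0, 0 < ε ≤ 1, c ∈ ℂ a constant, and f(α) = c e^{-ikα} + g(εα) e^{-ikα} with g ∈ H^{s+m}(ℝ). Then ‖(I - sgn(k)ℍ) f‖_{H^s(ℝ)} ≤ C(s) (ε^{m-1/2}/|k|^m) ‖g‖_{H^{s+m}(ℝ)}, where ℍ is the flat Hilbert transform. -/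
open MeasureTheory



private lemma osc_ft_scale_mod (k ε : ℝ) (hε : 0 < ε) (g : ℝ → ℂ) (ξ : ℝ) :
    FourierTransform.fourier (fun α : ℝ => g (ε * α) * Complex.exp (-Complex.I * k * α)) ξ
      = (ε⁻¹ : ℝ) • FourierTransform.fourier g ((ξ + k / (2 * Real.pi)) / ε) := by
  set k₀ : ℝ := k / (2 * Real.pi) with hk₀
  rw [Real.fourier_real_eq_integral_exp_smul,
    Real.fourier_real_eq_integral_exp_smul]
  have key : ∀ α : ℝ,
      Complex.exp (↑(-2 * Real.pi * α * ξ) * Complex.I) •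
          (g (ε * α) * Complex.exp (-Complex.I * k * α))
        = (fun β : ℝ => Complex.exp (↑(-2 * Real.pi * β * ((ξ + k₀) / ε)) * Complex.I) • g β)
            (ε * α) := by
    intro α
    simp only [smul_eq_mul]
    have h1 : ((-2 * Real.pi * (ε * α) * ((ξ + k₀) / ε) : ℝ) : ℂ) * Complex.I
        = ((-2 * Real.pi * α * ξ : ℝ) : ℂ) * Complex.I + (-Complex.I * k * α) := by
      have hπ : (Real.pi : ℂ) ≠ 0 := by exact_mod_cast Real.pi_ne_zero
      have hεC : (ε : ℂ) ≠ 0 := by exact_mod_cast hε.ne'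
      push_cast [hk₀]
      field_simp
      ring
    rw [h1, Complex.exp_add]
    ring
  calc (∫ v : ℝ, Complex.exp (↑(-2 * Real.pi * v * ξ) * Complex.I) •
          (g (ε * v) * Complex.exp (-Complex.I * k * v)))
      = ∫ v : ℝ, (fun β : ℝ =>
          Complex.exp (↑(-2 * Real.pi * β * ((ξ + k₀) / ε)) * Complex.I) • g β) (ε * v) :=
        integral_congr_ae (Filter.Eventually.of_forall key)
    _ = |ε⁻¹| • ∫ β : ℝ,
          Complex.exp (↑(-2 * Real.pi * β * ((ξ + k₀) / ε)) * Complex.I) • g β :=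
        MeasureTheory.Measure.integral_comp_mul_left
          (fun β : ℝ => Complex.exp (↑(-2 * Real.pi * β * ((ξ + k₀) / ε)) * Complex.I) • g β) ε
    _ = (ε⁻¹ : ℝ) • ∫ β : ℝ,
          Complex.exp (↑(-2 * Real.pi * β * ((ξ + k₀) / ε)) * Complex.I) • g β := by
        rw [abs_of_pos (inv_pos.mpr hε)]

private lemma osc_ptwise_core (s m : ℝ) (hs : 0 ≤ s) (hm : 0 ≤ m) (k ε : ℝ) (hk : k ≠ 0)
    (hε : 0 < ε) (η N ζ : ℝ)
    (habs1 : |ζ| ≤ |η|) (habs2 : |k| ≤ 2 * Real.pi * ε * |η|) :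
    (1 + ζ ^ 2) ^ s * (2 * (ε⁻¹ * N)) ^ 2
      ≤ (4 * (2 * Real.pi) ^ (2 * m) * ε ^ (2 * m - 2) / |k| ^ (2 * m)) *
          ((1 + η ^ 2) ^ (s + m) * N ^ 2) := by
  have hπ : (0 : ℝ) < 2 * Real.pi := by positivity
  have hkabs : (0 : ℝ) < |k| := abs_pos.mpr hk
  have hA1 : (1 + ζ ^ 2) ^ s ≤ (1 + η ^ 2) ^ s := by
    apply Real.rpow_le_rpow (by positivity) _ hs
    nlinarith [sq_abs ζ, sq_abs η, mul_self_le_mul_self (abs_nonneg ζ) habs1]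
  have hA2 : |k| ^ (2 * m) ≤ (2 * Real.pi) ^ (2 * m) * ε ^ (2 * m) * (1 + η ^ 2) ^ m := by
    calc |k| ^ (2 * m) ≤ (2 * Real.pi * ε * |η|) ^ (2 * m) :=
          Real.rpow_le_rpow (abs_nonneg k) habs2 (by positivity)
      _ = (2 * Real.pi) ^ (2 * m) * ε ^ (2 * m) * |η| ^ (2 * m) := by
          rw [Real.mul_rpow (by positivity) (abs_nonneg η),
            Real.mul_rpow (by positivity) hε.le]
      _ ≤ (2 * Real.pi) ^ (2 * m) * ε ^ (2 * m) * (1 + η ^ 2) ^ m := by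
          have h1 : ((η : ℝ) ^ 2) ^ m = |η| ^ (2 * m) := by
            rw [← sq_abs η, ← Real.rpow_natCast |η| 2, ← Real.rpow_mul (abs_nonneg η)]
            norm_num
          rw [← h1]
          have h2 : ((η : ℝ) ^ 2) ^ m ≤ (1 + η ^ 2) ^ m :=
            Real.rpow_le_rpow (by positivity) (by linarith) hm
          have h3 : (0:ℝ) ≤ (2 * Real.pi) ^ (2 * m) * ε ^ (2 * m) := by positivity
          nlinarith
  have hrs : ((1 : ℝ) + η ^ 2) ^ (s + m) = (1 + η ^ 2) ^ s * (1 + η ^ 2) ^ m :=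
    Real.rpow_add (by positivity) s m
  have hE : ε ^ (2 * m - 2) = ε ^ (2 * m) * (ε⁻¹) ^ 2 := by
    rw [Real.rpow_sub hε,
      show ε ^ (2:ℝ) = ε ^ (2:ℕ) by rw [← Real.rpow_natCast ε 2]; norm_num,
      div_eq_mul_inv, inv_pow]
  rw [hrs, hE, div_mul_eq_mul_div, le_div_iff₀ (by positivity : (0:ℝ) < |k| ^ (2 * m))]
  have key : (1 + ζ ^ 2) ^ s * |k| ^ (2 * m)
      ≤ (1 + η ^ 2) ^ s * ((2 * Real.pi) ^ (2 * m) * ε ^ (2 * m) * (1 + η ^ 2) ^ m) :=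
    mul_le_mul hA1 hA2 (Real.rpow_nonneg (by positivity) _)
      (Real.rpow_nonneg (by positivity) s)
  nlinarith [mul_le_mul_of_nonneg_left key
    (show (0:ℝ) ≤ 4 * (ε⁻¹) ^ 2 * N ^ 2 by positivity)]

private lemma osc_ptwise (s m : ℝ) (hs : 0 ≤ s) (hm : 0 ≤ m) (k ε : ℝ) (hk : k ≠ 0)
    (hε : 0 < ε) (hε1 : ε ≤ 1) (η N : ℝ)
    (hζ : ε * η - k / (2 * Real.pi) ≠ 0) :
    (1 + (ε * η - k / (2 * Real.pi)) ^ 2) ^ s *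
        (|1 + Real.sign k * Real.sign (ε * η - k / (2 * Real.pi))| * (ε⁻¹ * N)) ^ 2
      ≤ (4 * (2 * Real.pi) ^ (2 * m) * ε ^ (2 * m - 2) / |k| ^ (2 * m)) *
          ((1 + η ^ 2) ^ (s + m) * N ^ 2) := by
  set ζ : ℝ := ε * η - k / (2 * Real.pi) with hζdef
  have hπ : (0 : ℝ) < 2 * Real.pi := by positivity
  have hkk : 2 * Real.pi * (k / (2 * Real.pi)) = k := by field_simp
  rcases lt_or_gt_of_ne hk with hkneg | hkpos <;>
    rcases lt_or_gt_of_ne hζ with hzneg | hzpos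
  · -- k < 0, ζ < 0 : same sign
    have hcoef : |1 + Real.sign k * Real.sign ζ| = 2 := by
      rw [Real.sign_of_neg hkneg, Real.sign_of_neg hzneg]; norm_num
    rw [hcoef]
    have hk0neg : k / (2 * Real.pi) < 0 := div_neg_of_neg_of_pos hkneg hπ
    have hεη : ε * η < 0 := by rw [hζdef] at hzneg; linarith
    have hηneg : η < 0 := by
      by_contra h; push_neg at h
      exact absurd (mul_nonneg hε.le h) (not_le.mpr hεη)
    have hmono : ε * (-η) ≤ -η := mul_le_of_le_one_left (by linarith) hε1
    have habs1 : |ζ| ≤ |η| := by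
      rw [abs_of_neg hzneg, abs_of_neg hηneg, hζdef]
      nlinarith
    have habs2 : |k| ≤ 2 * Real.pi * ε * |η| := by
      rw [abs_of_neg hkneg, abs_of_neg hηneg]
      have h1 : ε * η < k / (2 * Real.pi) := by rw [hζdef] at hzneg; linarith
      have h2 := mul_le_mul_of_nonneg_left h1.le hπ.le
      nlinarith
    exact osc_ptwise_core s m hs hm k ε hk hε η N ζ habs1 habs2
  · -- k < 0, ζ > 0 : coefficient vanishes
    have hcoef : |1 + Real.sign k * Real.sign ζ| = 0 := by
      rw [Real.sign_of_neg hkneg, Real.sign_of_pos hzpos]; norm_num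
    rw [hcoef]
    have h0 : (0:ℝ) * (ε⁻¹ * N) = 0 := zero_mul _
    rw [h0]
    have : (0:ℝ) ^ 2 = 0 := by norm_num
    rw [this, mul_zero]
    positivity
  · -- k > 0, ζ < 0 : coefficient vanishes
    have hcoef : |1 + Real.sign k * Real.sign ζ| = 0 := by
      rw [Real.sign_of_pos hkpos, Real.sign_of_neg hzneg]; norm_num
    rw [hcoef]
    have h0 : (0:ℝ) * (ε⁻¹ * N) = 0 := zero_mul _
    rw [h0]
    have : (0:ℝ) ^ 2 = 0 := by norm_num
    rw [this, mul_zero]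
    positivity
  · -- k > 0, ζ > 0 : same sign
    have hcoef : |1 + Real.sign k * Real.sign ζ| = 2 := by
      rw [Real.sign_of_pos hkpos, Real.sign_of_pos hzpos]; norm_num
    rw [hcoef]
    have hk0pos : 0 < k / (2 * Real.pi) := div_pos hkpos hπ
    have hεη : 0 < ε * η := by rw [hζdef] at hzpos; linarith
    have hηpos : 0 < η := by
      by_contra h; push_neg at h
      exact absurd (mul_nonpos_of_nonneg_of_nonpos hε.le h) (not_le.mpr hεη)
    have hmono : ε * η ≤ η := mul_le_of_le_one_left hηpos.le hε1
    have habs1 : |ζ| ≤ |η| := by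
      rw [abs_of_pos hzpos, abs_of_pos hηpos, hζdef]
      nlinarith
    have habs2 : |k| ≤ 2 * Real.pi * ε * |η| := by
      rw [abs_of_pos hkpos, abs_of_pos hηpos]
      have h1 : k / (2 * Real.pi) < ε * η := by rw [hζdef] at hzpos; linarith
      have h2 := mul_le_mul_of_nonneg_left h1.le hπ.le
      nlinarith
    exact osc_ptwise_core s m hs hm k ε hk hε η N ζ habs1 habs2

private lemma osc_rpow_sq (x p : ℝ) (hx : 0 < x) : (x ^ p) ^ 2 = x ^ (2 * p) := by
  rw [← Real.rpow_natCast (x ^ p) 2, ← Real.rpow_mul hx.le, mul_comm]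
  norm_num

/-- Oscillatory regularity-to-decay estimate with nonzero background: for `k ≠ 0`,
`0 < ε ≤ 1` and `f(α) = c e^{-ikα} + g(εα) e^{-ikα}` with `g ∈ H^{s+m}(ℝ)`, the
`H^s`-norm of `(I - sgn(k)ℍ)f` is at most `C(s) ε^{m-1/2}/|k|^m ‖g‖_{H^{s+m}}`.
The operator `(I - sgn(k)ℍ)` (with `ℍ` the flat Hilbert transform, of Fourier multiplier
`-sgn ξ`) acts on the Fourier side as multiplication by `1 + sgn(k)sgn(ξ)`; it annihilates
the constant-background term `c e^{-ikα}` exactly, so its `H^s`-norm squared is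
`∫ (1+ξ²)^s ‖(1 + sgn k · sgn ξ) 𝓕(f - c e^{-ik·})(ξ)‖² dξ`. -/
theorem oscillatory_decay_estimate (s m : ℝ) (hs : 0 ≤ s) (hm : 0 ≤ m) :
    ∃ C : ℝ, 0 < C ∧
      ∀ (k ε : ℝ), k ≠ 0 → 0 < ε → ε ≤ 1 →
        ∀ (c : ℂ) (g : ℝ → ℂ),
          Integrable g (volume : Measure ℝ) →
          MemLp g 2 (volume : Measure ℝ) →
          Integrable (fun ξ : ℝ => (1 + ξ ^ 2) ^ (s + m) * ‖FourierTransform.fourier g ξ‖ ^ 2)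
            (volume : Measure ℝ) →
          ∀ f : ℝ → ℂ,
            (∀ α : ℝ, f α = c * Complex.exp (-Complex.I * k * α)
                + g (ε * α) * Complex.exp (-Complex.I * k * α)) →
            Real.sqrt (∫ ξ : ℝ, (1 + ξ ^ 2) ^ s *
                ‖((1 + Real.sign k * Real.sign ξ : ℝ) : ℂ) *
                  FourierTransform.fourier
                    (fun α : ℝ => f α - c * Complex.exp (-Complex.I * k * α)) ξ‖ ^ 2)
              ≤ C * (ε ^ (m - 1 / 2 : ℝ) / |k| ^ m) *
                  Real.sqrt (∫ ξ : ℝ, (1 + ξ ^ 2) ^ (s + m)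
                    * ‖FourierTransform.fourier g ξ‖ ^ 2) := by
  refine ⟨2 * (2 * Real.pi) ^ m, by positivity, ?_⟩
  intro k ε hk hε hε1 c g hgInt hgL2 hgSob f hf
  have hπ : (0 : ℝ) < 2 * Real.pi := by positivity
  have hkabs : (0 : ℝ) < |k| := abs_pos.mpr hk
  set k₀ : ℝ := k / (2 * Real.pi) with hk₀
  -- Fourier transform identity
  have hFT : ∀ ξ : ℝ,
      FourierTransform.fourier (fun α : ℝ => f α - c * Complex.exp (-Complex.I * k * α)) ξ
        = (ε⁻¹ : ℝ) • FourierTransform.fourier g ((ξ + k₀) / ε) := by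
    intro ξ
    have hfun : (fun α : ℝ => f α - c * Complex.exp (-Complex.I * k * α))
        = fun α : ℝ => g (ε * α) * Complex.exp (-Complex.I * k * α) := by
      funext α; rw [hf α]; ring
    rw [hfun]
    exact osc_ft_scale_mod k ε hε g ξ
  set Ψ : ℝ → ℝ := fun η =>
    (1 + (ε * η - k₀) ^ 2) ^ s *
      ‖((1 + Real.sign k * Real.sign (ε * η - k₀) : ℝ) : ℂ) *
        ((ε⁻¹ : ℝ) • FourierTransform.fourier g η)‖ ^ 2 with hΨ
  set K : ℝ := 4 * (2 * Real.pi) ^ (2 * m) * ε ^ (2 * m - 2) / |k| ^ (2 * m) with hK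
  set I₂ : ℝ := ∫ ξ : ℝ, (1 + ξ ^ 2) ^ (s + m) * ‖FourierTransform.fourier g ξ‖ ^ 2 with hI₂
  -- Step 1: rewrite LHS integrand
  have step1 : (∫ ξ : ℝ, (1 + ξ ^ 2) ^ s *
        ‖((1 + Real.sign k * Real.sign ξ : ℝ) : ℂ) *
          FourierTransform.fourier
            (fun α : ℝ => f α - c * Complex.exp (-Complex.I * k * α)) ξ‖ ^ 2)
      = ∫ ξ : ℝ, (fun t : ℝ => Ψ (t / ε)) (ξ + k₀) := by
    apply integral_congr_ae
    apply Filter.Eventually.of_forall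
    intro ξ
    have hx : ε * ((ξ + k₀) / ε) - k₀ = ξ := by field_simp; ring
    simp only [hΨ, hx, hFT ξ]
  -- Step 2: change of variables
  have step2 : (∫ ξ : ℝ, (fun t : ℝ => Ψ (t / ε)) (ξ + k₀)) = ε * ∫ η : ℝ, Ψ η := by
    rw [MeasureTheory.integral_add_right_eq_self (μ := volume) (fun t : ℝ => Ψ (t / ε)) k₀,
      MeasureTheory.Measure.integral_comp_div Ψ ε, abs_of_pos hε, smul_eq_mul]
  -- Step 3: a.e. pointwise bound and integral comparison
  have hae0 : ∀ᵐ η : ℝ, ε * η - k₀ ≠ 0 := by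
    rw [MeasureTheory.ae_iff]
    have hset : {η : ℝ | ¬ ε * η - k₀ ≠ 0} = {k₀ / ε} := by
      ext η
      simp only [Set.mem_setOf_eq, not_not, sub_eq_zero, Set.mem_singleton_iff]
      constructor
      · intro h; field_simp; linarith
      · intro h; subst h; field_simp
    rw [hset]
    exact Real.volume_singleton
  have step3 : (∫ η : ℝ, Ψ η) ≤ K * I₂ := by
    have hDint : Integrable (fun η : ℝ =>
        K * ((1 + η ^ 2) ^ (s + m) * ‖FourierTransform.fourier g η‖ ^ 2)) volume :=
      hgSob.const_mul K
    have hmono : ∀ᵐ η : ℝ, Ψ η ≤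
        K * ((1 + η ^ 2) ^ (s + m) * ‖FourierTransform.fourier g η‖ ^ 2) := by
      filter_upwards [hae0] with η hη
      have hnorm : ‖((1 + Real.sign k * Real.sign (ε * η - k₀) : ℝ) : ℂ) *
          ((ε⁻¹ : ℝ) • FourierTransform.fourier g η)‖
          = |1 + Real.sign k * Real.sign (ε * η - k₀)| *
              (ε⁻¹ * ‖FourierTransform.fourier g η‖) := by
        rw [norm_mul, norm_smul, Complex.norm_real, Real.norm_eq_abs, Real.norm_eq_abs,
          abs_of_pos (inv_pos.mpr hε)]
      simp only [hΨ, hnorm]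
      exact osc_ptwise s m hs hm k ε hk hε hε1 η ‖FourierTransform.fourier g η‖ hη
    calc (∫ η : ℝ, Ψ η)
        ≤ ∫ η : ℝ, K * ((1 + η ^ 2) ^ (s + m) * ‖FourierTransform.fourier g η‖ ^ 2) :=
          integral_mono_of_nonneg
            (Filter.Eventually.of_forall fun η => by simp only [hΨ]; positivity)
            hDint hmono
      _ = K * I₂ := by rw [MeasureTheory.integral_const_mul, hI₂]
  -- Step 4: collect powers
  set B : ℝ := 2 * (2 * Real.pi) ^ m * (ε ^ (m - 1 / 2 : ℝ) / |k| ^ m) with hB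
  have hBnn : 0 ≤ B := by positivity
  have hεK : ε * K = B ^ 2 := by
    have e2 : (|k| ^ m) ^ 2 = |k| ^ (2 * m) := osc_rpow_sq _ _ hkabs
    have e3 : ((2 * Real.pi) ^ m) ^ 2 = (2 * Real.pi) ^ (2 * m) := osc_rpow_sq _ _ hπ
    have e1 : (ε ^ (m - 1 / 2 : ℝ)) ^ 2 = ε ^ (2 * m - 1) := by
      rw [osc_rpow_sq _ _ hε]; norm_num; ring_nf
    have e4 : ε * ε ^ (2 * m - 2) = ε ^ (2 * m - 1) := by
      have h24 : (2 * m - 1 : ℝ) = 1 + (2 * m - 2) := by ring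
      rw [h24, Real.rpow_add hε, Real.rpow_one]
    rw [hB, mul_pow, mul_pow, div_pow, e1, e2, e3, hK]
    field_simp
    rw [← e4]
    ring
  have hI₂nn : 0 ≤ I₂ := by
    rw [hI₂]
    apply integral_nonneg
    intro η
    positivity
  have hfinal : (∫ ξ : ℝ, (1 + ξ ^ 2) ^ s *
        ‖((1 + Real.sign k * Real.sign ξ : ℝ) : ℂ) *
          FourierTransform.fourier
            (fun α : ℝ => f α - c * Complex.exp (-Complex.I * k * α)) ξ‖ ^ 2)
      ≤ B ^ 2 * I₂ := by
    rw [step1, step2, ← hεK]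
    calc ε * ∫ η : ℝ, Ψ η ≤ ε * (K * I₂) := by
          exact mul_le_mul_of_nonneg_left step3 hε.le
      _ = ε * K * I₂ := by ring
  calc Real.sqrt (∫ ξ : ℝ, (1 + ξ ^ 2) ^ s *
        ‖((1 + Real.sign k * Real.sign ξ : ℝ) : ℂ) *
          FourierTransform.fourier
            (fun α : ℝ => f α - c * Complex.exp (-Complex.I * k * α)) ξ‖ ^ 2)
      ≤ Real.sqrt (B ^ 2 * I₂) := Real.sqrt_le_sqrt hfinal
    _ = B * Real.sqrt I₂ := by
        rw [Real.sqrt_mul (sq_nonneg B), Real.sqrt_sq hBnn]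
    _ = 2 * (2 * Real.pi) ^ m * (ε ^ (m - 1 / 2 : ℝ) / |k| ^ m) * Real.sqrt I₂ := by
        rw [hB]
end
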